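/- arXiv:2002.00031 — 3 statements merged into one kernel-verified Lean document; each statement's English description precedes it below -/
import Mathlib

section
/- Let g be a probability density compactly supported on a convex domain Y ⊆ ℝ^d with finite second moment, and let f_Θ be its translation-dilation transform with parameters Θ = (s_1,…,s_d, λ_1,…,λ_d). Then the squared quadratic Wasserstein distance satisfies I(Θ) = W₂²(f_Θ, g) = Σ_{k=1}^d [ a_k (λ_k − 1)² + 2 b_k s_k (λ_k − 1) + s_k² ], where a_k = ∫_Y |⟨y,e_k⟩|² dν and b_k = ∫_Y ⟨y,e_k⟩ dν. -/
open MeasureTheory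
open scoped ENNReal

noncomputable def dilMap (d : ℕ) (lam : Fin d → ℝ) :
    EuclideanSpace ℝ (Fin d) →ₗ[ℝ] EuclideanSpace ℝ (Fin d) where
  toFun y := WithLp.toLp 2 (fun k => lam k * y k)
  map_add' x y := by ext k; simp [PiLp.add_apply]; ring
  map_smul' c x := by ext k; simp [PiLp.smul_apply, smul_eq_mul]; ring

lemma dilMap_det (d : ℕ) (lam : Fin d → ℝ) :
    LinearMap.det (dilMap d lam) = ∏ k, lam k := by
  let b := (EuclideanSpace.basisFun (Fin d) ℝ).toBasis
  rw [← LinearMap.det_toMatrix b]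
  have : LinearMap.toMatrix b b (dilMap d lam) = Matrix.diagonal lam := by
    ext i j
    rw [LinearMap.toMatrix_apply]
    simp [b, dilMap, EuclideanSpace.single_apply, Matrix.diagonal]
   
  rw [this, Matrix.det_diagonal]

lemma map_S_volume (d : ℕ) (s lam : Fin d → ℝ) (hlam : ∀ k, 0 < lam k) :
    Measure.map (fun y : EuclideanSpace ℝ (Fin d) =>
        (WithLp.toLp 2 (fun k => s k + lam k * y k) : EuclideanSpace ℝ (Fin d))) volume
      = (ENNReal.ofReal (∏ k, lam k))⁻¹ • (volume : Measure (EuclideanSpace ℝ (Fin d))) := by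
  have hdet : LinearMap.det (dilMap d lam) = ∏ k, lam k := dilMap_det d lam
  have hpos : 0 < ∏ k, lam k := Finset.prod_pos fun k _ => hlam k
  have hLcont : Continuous (dilMap d lam) :=
    (dilMap d lam).continuous_of_finiteDimensional
  have hcomp : (fun y : EuclideanSpace ℝ (Fin d) =>
        (WithLp.toLp 2 (fun k => s k + lam k * y k) : EuclideanSpace ℝ (Fin d)))
      = (fun x : EuclideanSpace ℝ (Fin d) => (WithLp.toLp 2 s : EuclideanSpace ℝ (Fin d)) + x)
        ∘ (dilMap d lam) := by
    funext y; ext k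
    simp [dilMap, PiLp.add_apply]
  rw [hcomp, ← Measure.map_map (measurable_const_add _) hLcont.measurable]
  rw [Measure.map_linearMap_addHaar_eq_smul_addHaar volume (by rw [hdet]; positivity)]
  rw [Measure.map_smul, Measure.IsAddLeftInvariant.map_add_left_eq_self]
  rw [hdet, abs_of_pos (by positivity), ENNReal.ofReal_inv_of_pos hpos]

/-- The squared quadratic Wasserstein distance, defined as the infimum of the
quadratic transport cost over all couplings of the two measures. -/
noncomputable def W2sq {E : Type*} [MeasurableSpace E] [NormedAddCommGroup E]
    (μ ν : Measure E) : ℝ≥0∞ :=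
  ⨅ π ∈ {π : Measure (E × E) | π.map Prod.fst = μ ∧ π.map Prod.snd = ν},
    ∫⁻ p, (‖p.1 - p.2‖₊ : ℝ≥0∞) ^ 2 ∂π

/-- closed form of `W₂²(f_Θ, g)` for the translation-dilation transform:
`W₂²(f_Θ,g) = Σ_k [a_k (λ_k−1)² + 2 b_k s_k (λ_k−1) + s_k²]` with
`a_k = ∫ |⟨y,e_k⟩|² dν`, `b_k = ∫ ⟨y,e_k⟩ dν`. -/
theorem W2sq_translation_dilation_formula
    (d : ℕ) (g : EuclideanSpace ℝ (Fin d) → ℝ)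
    (Y : Set (EuclideanSpace ℝ (Fin d)))
    (hY : Convex ℝ Y) (hY_cpt : IsCompact Y)
    (hg_meas : Measurable g) (hg_nonneg : ∀ x, 0 ≤ g x)
    (hg_prob : ∫ x, g x = 1)
    (hg_mom : Integrable (fun x => ‖x‖ ^ 2 * g x))
    (hg_supp : Function.support g ⊆ Y)
    (s : Fin d → ℝ) (lam : Fin d → ℝ) (hlam : ∀ k, 0 < lam k)
    (fΘ : EuclideanSpace ℝ (Fin d) → ℝ)
    (hf : ∀ x, fΘ x = (∏ k, (lam k)⁻¹) * g (WithLp.toLp 2 (fun k => (x k - s k) / lam k)))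
    (a b : Fin d → ℝ)
    (ha : ∀ k, a k = ∫ y, |y k| ^ 2 * g y)
    (hb : ∀ k, b k = ∫ y, y k * g y) :
    W2sq (volume.withDensity (fun x => ENNReal.ofReal (fΘ x)))
        (volume.withDensity (fun x => ENNReal.ofReal (g x)))
      = ENNReal.ofReal
          (∑ k, (a k * (lam k - 1) ^ 2 + 2 * b k * s k * (lam k - 1) + s k ^ 2)) := by
  classical
  set ν : Measure (EuclideanSpace ℝ (Fin d)) :=
    volume.withDensity (fun x => ENNReal.ofReal (g x)) with hνdef
  set μ : Measure (EuclideanSpace ℝ (Fin d)) :=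
    volume.withDensity (fun x => ENNReal.ofReal (fΘ x)) with hμdef
  set C : ℝ := ∑ k, (a k * (lam k - 1) ^ 2 + 2 * b k * s k * (lam k - 1) + s k ^ 2) with hCdef
  set S : EuclideanSpace ℝ (Fin d) → EuclideanSpace ℝ (Fin d) :=
    fun y => (WithLp.toLp 2 (fun k => s k + lam k * y k) : EuclideanSpace ℝ (Fin d)) with hSdef
  have hprod : 0 < ∏ k, lam k := Finset.prod_pos fun k _ => hlam k
  have hlam0 : ∀ k, lam k ≠ 0 := fun k => (hlam k).ne'
  -- basic continuity facts
  have ccoord : ∀ k, Continuous fun y : EuclideanSpace ℝ (Fin d) => y k :=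
    fun k => (EuclideanSpace.proj (𝕜 := ℝ) k).continuous
  have hSc : Continuous S := by
    have : S = (fun x => (WithLp.toLp 2 s : EuclideanSpace ℝ (Fin d)) + x) ∘ (dilMap d lam) := by
      funext y; ext k; simp [S, dilMap, PiLp.add_apply]
    rw [this]
    exact (continuous_const.add continuous_id).comp (dilMap d lam).continuous_of_finiteDimensional
  -- integrability of g
  have hgi : Integrable g := by
    by_contra h
    rw [integral_undef h] at hg_prob
    exact one_ne_zero hg_prob.symm
  -- generic integrability against g
  have hint : ∀ φ : EuclideanSpace ℝ (Fin d) → ℝ, Continuous φ →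
      Integrable (fun y => φ y * g y) := by
    intro φ hφ
    obtain ⟨M, hM⟩ := hY_cpt.exists_bound_of_continuousOn hφ.continuousOn
    refine Integrable.mono' (hgi.const_mul M) (hφ.measurable.mul hg_meas).aestronglyMeasurable ?_
    filter_upwards with y
    by_cases h : g y = 0
    · simp [h]
    · have hy : y ∈ Y := hg_supp h
      rw [norm_mul, Real.norm_eq_abs (g y), abs_of_nonneg (hg_nonneg y)]
      exact mul_le_mul_of_nonneg_right (hM y hy) (hg_nonneg y)
  -- norm squared in coordinates
  have hnorm : ∀ v : EuclideanSpace ℝ (Fin d), ‖v‖ ^ 2 = ∑ k, (v k) ^ 2 := by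
    intro v
    rw [EuclideanSpace.norm_eq, Real.sq_sqrt (by positivity)]
    simp [sq_abs]
  -- the key measure identity : μ = S_* ν
  have hmapS : Measure.map S volume
      = (ENNReal.ofReal (∏ k, lam k))⁻¹ • (volume : Measure (EuclideanSpace ℝ (Fin d))) :=
    map_S_volume d s lam hlam
  have hfΘmeas : Measurable fΘ := by
    have hTc : Continuous fun x : EuclideanSpace ℝ (Fin d) =>
        (WithLp.toLp 2 (fun k => (x k - s k) / lam k) : EuclideanSpace ℝ (Fin d)) := by
      have : (fun x : EuclideanSpace ℝ (Fin d) =>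
          (WithLp.toLp 2 (fun k => (x k - s k) / lam k) : EuclideanSpace ℝ (Fin d)))
          = fun x => dilMap d (fun k => (lam k)⁻¹)
              (x + (WithLp.toLp 2 (fun k => -s k) : EuclideanSpace ℝ (Fin d))) := by
        funext x; ext k
        simp [dilMap, PiLp.add_apply]
        ring
      rw [this]
      exact (dilMap d _).continuous_of_finiteDimensional.comp (continuous_id.add continuous_const)
    have : fΘ = fun x => (∏ k, (lam k)⁻¹) *
        g (WithLp.toLp 2 (fun k => (x k - s k) / lam k)) := funext hf
    rw [this]
    exact (hg_meas.comp hTc.measurable).const_mul _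
  have hmap : μ = Measure.map S ν := by
    ext A hA
    rw [Measure.map_apply hSc.measurable hA, hμdef, hνdef,
      withDensity_apply _ hA, withDensity_apply _ (hSc.measurable hA)]
    set c : ℝ≥0∞ := ENNReal.ofReal (∏ k, lam k) with hcdef
    have hc0 : c ≠ 0 := by simp [hcdef, hprod]
    have hctop : c ≠ ⊤ := ENNReal.ofReal_ne_top
    have hv : (volume : Measure (EuclideanSpace ℝ (Fin d))) = c • Measure.map S volume := by
      rw [hmapS, smul_smul, ENNReal.mul_inv_cancel hc0 hctop, one_smul]
    calc ∫⁻ x in A, ENNReal.ofReal (fΘ x) ∂volume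
        = ∫⁻ x in A, ENNReal.ofReal (fΘ x) ∂(c • Measure.map S volume) := by rw [← hv]
      _ = c * ∫⁻ x in A, ENNReal.ofReal (fΘ x) ∂(Measure.map S volume) := by
          rw [Measure.restrict_smul, lintegral_smul_measure, smul_eq_mul]
      _ = c * ∫⁻ y in S ⁻¹' A, ENNReal.ofReal (fΘ (S y)) ∂volume := by
          rw [setLIntegral_map hA hfΘmeas.ennreal_ofReal hSc.measurable]
      _ = ∫⁻ y in S ⁻¹' A, ENNReal.ofReal (g y) ∂volume := by
          rw [← lintegral_const_mul (f := fun y => ENNReal.ofReal (fΘ (S y))) c (Measurable.ennreal_ofReal (by exact hfΘmeas.comp hSc.measurable))]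
          congr 1
          funext y
          have harg : (WithLp.toLp 2 (fun k => (S y k - s k) / lam k) : EuclideanSpace ℝ (Fin d)) = y := by
            ext k
            show (S y k - s k) / lam k = y k
            rw [hSdef]
            have := hlam0 k
            field_simp
            ring
          rw [hf (S y), harg, Finset.prod_inv_distrib,
            ENNReal.ofReal_mul (by positivity), ENNReal.ofReal_inv_of_pos hprod]
          rw [← mul_assoc, ← hcdef, ENNReal.mul_inv_cancel hc0 hctop, one_mul]
  have hYmeas : MeasurableSet Y := hY_cpt.isClosed.measurableSet
  have hν_univ : ν Set.univ = 1 := by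
    rw [hνdef, withDensity_apply _ MeasurableSet.univ, Measure.restrict_univ,
      ← ofReal_integral_eq_lintegral_ofReal hgi (Filter.Eventually.of_forall hg_nonneg),
      hg_prob, ENNReal.ofReal_one]
  haveI hνfin : IsFiniteMeasure ν := ⟨by rw [hν_univ]; exact ENNReal.one_lt_top⟩
  have hνY : ν Yᶜ = 0 := by
    rw [hνdef, withDensity_apply _ hYmeas.compl]
    have h0 : ∀ᵐ y ∂(volume : Measure (EuclideanSpace ℝ (Fin d))), y ∈ Yᶜ →
        ENNReal.ofReal (g y) = 0 := by
      refine Filter.Eventually.of_forall (fun y hy => ?_)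
      have : g y = 0 := Function.notMem_support.mp (fun hs => hy (hg_supp hs))
      simp [this]
    rw [setLIntegral_congr_fun_ae hYmeas.compl h0]
    simp
  have hνae : ∀ᵐ y ∂ν, y ∈ Y := by
    rw [ae_iff]
    exact hνY
  have hμ_univ : μ Set.univ = 1 := by
    rw [hmap, Measure.map_apply hSc.measurable MeasurableSet.univ, Set.preimage_univ, hν_univ]
  have hνint : ∀ φ : EuclideanSpace ℝ (Fin d) → ℝ, ∫ y, φ y ∂ν = ∫ y, φ y * g y := by
    intro φ
    rw [hνdef]
    have hd : (fun x => ENNReal.ofReal (g x)) = (fun x => ((g x).toNNReal : ℝ≥0∞)) := rfl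
    rw [hd, integral_withDensity_eq_integral_smul hg_meas.real_toNNReal]
    congr 1
    funext y
    rw [NNReal.smul_def, smul_eq_mul, Real.coe_toNNReal _ (hg_nonneg y), mul_comm]
  set F : EuclideanSpace ℝ (Fin d) → ℝ := fun y => ∑ k, ((lam k - 1) * y k + s k)^2 with hFdef
  have hFc : Continuous F :=
    continuous_finset_sum _ fun k _ =>
      ((continuous_const.mul (ccoord k)).add continuous_const).pow 2
  have hFnonneg : ∀ y, 0 ≤ F y := fun y => Finset.sum_nonneg fun k _ => sq_nonneg _
  have hFg_int : Integrable (fun y => F y * g y) := hint F hFc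
  have ha' : ∀ k, a k = ∫ y, (y k)^2 * g y := by
    intro k; rw [ha k]; congr 1; funext y; rw [sq_abs]
  have hI2 : ∀ k, Integrable (fun y : EuclideanSpace ℝ (Fin d) => (y k)^2 * g y) :=
    fun k => hint _ ((ccoord k).pow 2)
  have hI1 : ∀ k, Integrable (fun y : EuclideanSpace ℝ (Fin d) => y k * g y) :=
    fun k => hint _ (ccoord k)
  have hFg_val : ∫ y, F y * g y = C := by
    have hexp : (fun y : EuclideanSpace ℝ (Fin d) => F y * g y)
        = fun y => ∑ k, ((lam k - 1)^2 * ((y k)^2 * g y)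
            + (2 * s k * (lam k - 1)) * (y k * g y) + (s k)^2 * g y) := by
      funext y
      rw [hFdef]
      simp only
      rw [Finset.sum_mul]
      exact Finset.sum_congr rfl fun k _ => by ring
    rw [hexp, integral_finset_sum]
    · rw [hCdef]
      refine Finset.sum_congr rfl fun k _ => ?_
      rw [integral_add, integral_add, integral_const_mul, integral_const_mul,
        integral_const_mul, hg_prob, ← ha' k, ← hb k]
      · ring
      all_goals first
        | exact (hI2 k).const_mul _
        | exact (hI1 k).const_mul _
        | exact ((hI2 k).const_mul _).add ((hI1 k).const_mul _)
        | exact hgi.const_mul _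
    · intro k _
      exact (((hI2 k).const_mul _).add ((hI1 k).const_mul _)).add (hgi.const_mul _)
  have hFν : ∫ y, F y ∂ν = C := by rw [hνint F]; exact hFg_val
  have hνIntegrable : ∀ φ : EuclideanSpace ℝ (Fin d) → ℝ, Continuous φ → Integrable φ ν := by
    intro φ hφ
    obtain ⟨M, hM⟩ := hY_cpt.exists_bound_of_continuousOn hφ.continuousOn
    exact Integrable.mono' (integrable_const M) hφ.aestronglyMeasurable
      (by filter_upwards [hνae] with y hy; exact hM y hy)
  have hcost_meas : Measurable fun p : EuclideanSpace ℝ (Fin d) × EuclideanSpace ℝ (Fin d) =>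
      ((‖p.1 - p.2‖₊ : ℝ≥0∞)) ^ 2 :=
    ((measurable_fst.sub measurable_snd).nnnorm.coe_nnreal_ennreal).pow_const 2
  have hnn : ∀ v : EuclideanSpace ℝ (Fin d), ((‖v‖₊ : ℝ≥0∞)) ^ 2 = ENNReal.ofReal (‖v‖ ^ 2) := by
    intro v
    rw [ENNReal.ofReal_pow (norm_nonneg v), ofReal_norm, enorm_eq_nnnorm]
  have hSy : ∀ y : EuclideanSpace ℝ (Fin d), ‖S y - y‖ ^ 2 = F y := by
    intro y
    rw [hnorm, hFdef]
    refine Finset.sum_congr rfl fun k _ => ?_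
    have h1 : (S y - y) k = S y k - y k := rfl
    have h2 : S y k = s k + lam k * y k := rfl
    rw [h1, h2]
    ring
  set π₀ : Measure (EuclideanSpace ℝ (Fin d) × EuclideanSpace ℝ (Fin d)) :=
    Measure.map (fun y => (S y, y)) ν with hπ₀def
  have hemb : Measurable fun y : EuclideanSpace ℝ (Fin d) => (S y, y) :=
    hSc.measurable.prodMk measurable_id
  have hπ₀fst : π₀.map Prod.fst = μ := by
    rw [hπ₀def, Measure.map_map measurable_fst hemb]
    exact hmap.symm
  have hπ₀snd : π₀.map Prod.snd = ν := by
    rw [hπ₀def, Measure.map_map measurable_snd hemb]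
    exact Measure.map_id
  have hπ₀cost : ∫⁻ p, (‖p.1 - p.2‖₊ : ℝ≥0∞) ^ 2 ∂π₀ = ENNReal.ofReal C := by
    rw [hπ₀def, lintegral_map hcost_meas hemb]
    calc ∫⁻ y, (‖S y - y‖₊ : ℝ≥0∞) ^ 2 ∂ν = ∫⁻ y, ENNReal.ofReal (F y) ∂ν := by
          refine lintegral_congr fun y => ?_
          rw [hnn, hSy]
      _ = ENNReal.ofReal (∫ y, F y ∂ν) := by
          rw [ofReal_integral_eq_lintegral_ofReal (hνIntegrable F hFc)
            (Filter.Eventually.of_forall hFnonneg)]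
      _ = ENNReal.ofReal C := by rw [hFν]
  simp only [W2sq]
  refine le_antisymm (le_trans (iInf₂_le π₀ ⟨hπ₀fst, hπ₀snd⟩) hπ₀cost.le) (le_iInf₂ fun π hπ => ?_)
  obtain ⟨hπ1, hπ2⟩ := hπ
  set h : EuclideanSpace ℝ (Fin d) → ℝ :=
    fun x => ∑ k, ((x k)^2 - (x k - s k)^2 / lam k) with hhdef
  set j : EuclideanSpace ℝ (Fin d) → ℝ :=
    fun y => ∑ k, ((1 - lam k) * (y k)^2 - 2 * s k * y k) with hjdef
  have hhc : Continuous h := continuous_finset_sum _ fun k _ =>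
    ((ccoord k).pow 2).sub ((((ccoord k).sub continuous_const).pow 2).div_const _)
  have hjc : Continuous j := continuous_finset_sum _ fun k _ =>
    (continuous_const.mul ((ccoord k).pow 2)).sub (continuous_const.mul (ccoord k))
  have hHJle : ∀ x y : EuclideanSpace ℝ (Fin d), h x + j y ≤ ‖x - y‖ ^ 2 := by
    intro x y
    rw [hnorm, hhdef, hjdef]
    simp only
    rw [← Finset.sum_add_distrib]
    refine Finset.sum_le_sum fun k _ => ?_
    have hsub : (x - y) k = x k - y k := rfl
    have hid : (x k - y k)^2 = (((x k)^2 - (x k - s k)^2 / lam k)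
        + ((1 - lam k) * (y k)^2 - 2 * s k * y k)) + ((x k - s k) - lam k * y k)^2 / lam k := by
      have := hlam0 k
      field_simp
      ring
    have hres : 0 ≤ ((x k - s k) - lam k * y k)^2 / lam k := by
      have := (hlam k).le
      positivity
    rw [hsub, hid]
    linarith
  have hHJeq : ∀ y : EuclideanSpace ℝ (Fin d), h (S y) + j y = F y := by
    intro y
    rw [hhdef, hjdef, hFdef]
    simp only
    rw [← Finset.sum_add_distrib]
    refine Finset.sum_congr rfl fun k _ => ?_
    have hs : S y k = s k + lam k * y k := rfl
    rw [hs]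
    have := hlam0 k
    field_simp
    ring
  have hK : IsCompact (S '' Y) := hY_cpt.image hSc
  have hKmeas : MeasurableSet (S '' Y) := hK.isClosed.measurableSet
  have hμK : μ (S '' Y)ᶜ = 0 := by
    rw [hmap, Measure.map_apply hSc.measurable hKmeas.compl]
    refine measure_mono_null ?_ hνY
    intro y hy
    exact fun hyY => hy (Set.mem_image_of_mem S hyY)
  haveI hπfin : IsFiniteMeasure π := by
    constructor
    have huniv : π Set.univ = μ Set.univ := by
      rw [← hπ1, Measure.map_apply measurable_fst MeasurableSet.univ, Set.preimage_univ]
    rw [huniv, hμ_univ]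
    exact ENNReal.one_lt_top
  have hπae1 : ∀ᵐ p ∂π, p.1 ∈ S '' Y := by
    rw [ae_iff]
    have hset : {p : EuclideanSpace ℝ (Fin d) × EuclideanSpace ℝ (Fin d) | ¬ p.1 ∈ S '' Y}
        = Prod.fst ⁻¹' (S '' Y)ᶜ := rfl
    rw [hset, ← Measure.map_apply measurable_fst hKmeas.compl, hπ1]
    exact hμK
  have hπae2 : ∀ᵐ p ∂π, p.2 ∈ Y := by
    rw [ae_iff]
    have hset : {p : EuclideanSpace ℝ (Fin d) × EuclideanSpace ℝ (Fin d) | ¬ p.2 ∈ Y}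
        = Prod.snd ⁻¹' Yᶜ := rfl
    rw [hset, ← Measure.map_apply measurable_snd hYmeas.compl, hπ2]
    exact hνY
  obtain ⟨Mh, hMh⟩ := hK.exists_bound_of_continuousOn hhc.continuousOn
  obtain ⟨Mj, hMj⟩ := hY_cpt.exists_bound_of_continuousOn hjc.continuousOn
  have hhint : Integrable (fun p : EuclideanSpace ℝ (Fin d) × EuclideanSpace ℝ (Fin d) => h p.1) π :=
    Integrable.mono' (integrable_const Mh) (hhc.comp continuous_fst).aestronglyMeasurable
      (by filter_upwards [hπae1] with p hp; exact hMh _ hp)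
  have hjint : Integrable (fun p : EuclideanSpace ℝ (Fin d) × EuclideanSpace ℝ (Fin d) => j p.2) π :=
    Integrable.mono' (integrable_const Mj) (hjc.comp continuous_snd).aestronglyMeasurable
      (by filter_upwards [hπae2] with p hp; exact hMj _ hp)
  have hGint : Integrable (fun p : EuclideanSpace ℝ (Fin d) × EuclideanSpace ℝ (Fin d) =>
      h p.1 + j p.2) π := hhint.add hjint
  have hGval : ∫ p, (h p.1 + j p.2) ∂π = C := by
    rw [integral_add hhint hjint]
    have h1 : ∫ p, h p.1 ∂π = ∫ x, h x ∂μ := by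
      rw [← hπ1, integral_map measurable_fst.aemeasurable hhc.aestronglyMeasurable]
    have h2 : ∫ p, j p.2 ∂π = ∫ y, j y ∂ν := by
      rw [← hπ2, integral_map measurable_snd.aemeasurable hjc.aestronglyMeasurable]
    have h3 : ∫ x, h x ∂μ = ∫ y, h (S y) ∂ν := by
      rw [hmap, integral_map hSc.measurable.aemeasurable hhc.aestronglyMeasurable]
    rw [h1, h2, h3, ← integral_add (f := fun y => h (S y)) (g := j) (hνIntegrable _ (hhc.comp hSc)) (hνIntegrable _ hjc), ← hFν]
    exact integral_congr_ae (Filter.Eventually.of_forall fun y => hHJeq y)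
  have step1 : ∫⁻ p, ENNReal.ofReal (h p.1 + j p.2) ∂π
      ≤ ∫⁻ p, (‖p.1 - p.2‖₊ : ℝ≥0∞) ^ 2 ∂π := by
    refine lintegral_mono fun p => ?_
    rw [hnn]
    exact ENNReal.ofReal_le_ofReal (hHJle p.1 p.2)
  refine le_trans ?_ step1
  rw [← hGval]
  have hpos : ∫ p, (h p.1 + j p.2) ∂π ≤ ∫ p, max (h p.1 + j p.2) 0 ∂π :=
    integral_mono hGint hGint.pos_part fun p => le_max_left _ _
  refine le_trans (ENNReal.ofReal_le_ofReal hpos) ?_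
  rw [ofReal_integral_eq_lintegral_ofReal hGint.pos_part
    (Filter.Eventually.of_forall fun p => le_max_right _ _)]
  refine lintegral_mono fun p => ?_
  rcases le_total (h p.1 + j p.2) 0 with hc | hc
  · simp [max_eq_right hc]
  · simp [max_eq_left hc]
end

section
/- The quadratic Wasserstein distance is not invariant under mass addition: there exist nonnegative integrable functions f, g of equal mass and a function h̄ with f + h̄ ≥ 0, g + h̄ ≥ 0, such that W₂(f + h̄, g + h̄) ≠ W₂(f, g). -/
open MeasureTheory
open scoped ENNReal

open Set in
lemma W2sq_aux_upper :
    W2sq (volume.restrict (Ico (0:ℝ) 4)) (volume.restrict (Ico (1:ℝ) 5)) ≤ 4 := by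
  set μ : Measure ℝ := volume.restrict (Ico (0:ℝ) 4) with hμ
  set π : Measure (ℝ × ℝ) := μ.map (fun x => (x, x + 1)) with hπ
  have hadd : Measurable (fun x : ℝ => x + 1) := by fun_prop
  have hT : Measurable (fun x : ℝ => (x, x + 1)) := by fun_prop
  have h1 : π.map Prod.fst = μ := by
    rw [hπ, Measure.map_map measurable_fst hT]
    have h : (Prod.fst ∘ fun x : ℝ => (x, x + 1)) = id := rfl
    rw [h, Measure.map_id]
  have h2 : π.map Prod.snd = volume.restrict (Ico (1:ℝ) 5) := by
    rw [hπ, Measure.map_map measurable_snd hT]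
    have hc : (Prod.snd ∘ fun x : ℝ => (x, x + 1)) = (· + (1:ℝ)) := rfl
    rw [hc]
    have hpre : (· + (1:ℝ)) ⁻¹' Ico (1:ℝ) 5 = Ico (0:ℝ) 4 := by
      ext x
      simp only [mem_preimage, mem_Ico]
      constructor <;> intro h <;> constructor <;> linarith [h.1, h.2]
    rw [hμ, ← hpre, ← Measure.restrict_map hadd measurableSet_Ico,
      map_add_right_eq_self volume 1]
  have hcost : (∫⁻ p, (‖p.1 - p.2‖₊ : ℝ≥0∞) ^ 2 ∂π) = 4 := by
    rw [hπ, lintegral_map (f := fun p : ℝ × ℝ => (‖p.1 - p.2‖₊ : ℝ≥0∞) ^ 2)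
      ((measurable_fst.sub measurable_snd).nnnorm.coe_nnreal_ennreal.pow_const 2) hT]
    have h : ∀ x : ℝ, ((‖x - (x + 1)‖₊ : ℝ≥0∞)) ^ 2 = 1 := by
      intro x
      have hx : x - (x + 1) = -1 := by ring
      rw [hx]
      norm_num
    simp only [h]
    rw [lintegral_one, hμ, Measure.restrict_apply_univ, Real.volume_Ico]
    norm_num
  calc W2sq (volume.restrict (Ico (0:ℝ) 4)) (volume.restrict (Ico (1:ℝ) 5))
      ≤ ∫⁻ p, (‖p.1 - p.2‖₊ : ℝ≥0∞) ^ 2 ∂π := by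
        rw [W2sq]
        exact iInf₂_le π ⟨h1, h2⟩
    _ = 4 := hcost

open Set in
lemma W2sq_aux_lower :
    (9 : ℝ≥0∞) ≤ W2sq (volume.restrict (Ico (0:ℝ) 1)) (volume.restrict (Ico (4:ℝ) 5)) := by
  rw [W2sq]
  refine le_iInf₂ fun π hπ => ?_
  obtain ⟨h1, h2⟩ := hπ
  set A : Set ℝ := Ico (0:ℝ) 1 with hAdef
  set B : Set ℝ := Ico (4:ℝ) 5 with hBdef
  have hA : MeasurableSet A := measurableSet_Ico
  have hB : MeasurableSet B := measurableSet_Ico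
  have hfstc : π (Prod.fst ⁻¹' Aᶜ) = 0 := by
    rw [← Measure.map_apply measurable_fst hA.compl, h1,
      Measure.restrict_apply hA.compl, compl_inter_self, measure_empty]
  have hsndc : π (Prod.snd ⁻¹' Bᶜ) = 0 := by
    rw [← Measure.map_apply measurable_snd hB.compl, h2,
      Measure.restrict_apply hB.compl, compl_inter_self, measure_empty]
  have huniv : π Set.univ = 1 := by
    have h := Measure.map_apply (μ := π) measurable_fst MeasurableSet.univ
    rw [h1] at h
    simp only [preimage_univ] at h
    rw [← h, Measure.restrict_apply_univ, hAdef, Real.volume_Ico]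
    norm_num
  have hcompl : (A ×ˢ B)ᶜ ⊆ (Prod.fst ⁻¹' Aᶜ) ∪ (Prod.snd ⁻¹' Bᶜ) := by
    intro p hp
    simp only [mem_compl_iff, mem_prod, not_and_or] at hp
    rcases hp with h | h
    · exact Or.inl h
    · exact Or.inr h
  have hcompl0 : π ((A ×ˢ B)ᶜ) = 0 :=
    le_antisymm ((measure_mono hcompl).trans
      ((measure_union_le _ _).trans (by rw [hfstc, hsndc]; simp))) zero_le
  have hAB : (1 : ℝ≥0∞) ≤ π (A ×ˢ B) := by
    have h : π Set.univ ≤ π (A ×ˢ B) + π ((A ×ˢ B)ᶜ) := by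
      conv_lhs => rw [← union_compl_self (A ×ˢ B)]
      exact measure_union_le _ _
    rw [huniv, hcompl0, add_zero] at h
    exact h
  have hpt : ∀ p : ℝ × ℝ, (A ×ˢ B).indicator (fun _ => (9 : ℝ≥0∞)) p ≤
      (‖p.1 - p.2‖₊ : ℝ≥0∞) ^ 2 := by
    intro p
    by_cases hp : p ∈ A ×ˢ B
    · rw [indicator_of_mem hp]
      obtain ⟨hp1, hp2⟩ := hp
      rw [hAdef] at hp1
      rw [hBdef] at hp2
      have hd : (3 : ℝ) ≤ ‖p.1 - p.2‖ := by
        rw [Real.norm_eq_abs, abs_sub_comm, abs_of_nonneg (by linarith [hp1.2, hp2.1])]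
        linarith [hp1.2, hp2.1]
      have h3 : (3 : ℝ≥0∞) ≤ (‖p.1 - p.2‖₊ : ℝ≥0∞) := by
        rw [← enorm_eq_nnnorm, ← ofReal_norm]
        calc (3 : ℝ≥0∞) = ENNReal.ofReal 3 := by norm_num
          _ ≤ ENNReal.ofReal ‖p.1 - p.2‖ := ENNReal.ofReal_le_ofReal hd
      calc (9 : ℝ≥0∞) = 3 ^ 2 := by norm_num
        _ ≤ (‖p.1 - p.2‖₊ : ℝ≥0∞) ^ 2 := pow_le_pow_left₀ zero_le h3 2
    · rw [indicator_of_notMem hp]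
      exact zero_le
  calc (9 : ℝ≥0∞) = 9 * 1 := by rw [mul_one]
    _ ≤ 9 * π (A ×ˢ B) := mul_le_mul_right hAB 9
    _ = ∫⁻ p, (A ×ˢ B).indicator (fun _ => (9 : ℝ≥0∞)) p ∂π := by
        rw [lintegral_indicator (hA.prod hB) _, setLIntegral_const]
    _ ≤ ∫⁻ p, (‖p.1 - p.2‖₊ : ℝ≥0∞) ^ 2 ∂π := lintegral_mono hpt

open Set in
lemma withDensity_ofReal_indicator_Ico (a b : ℝ) :
    (volume.withDensity fun x => ENNReal.ofReal ((Ico a b).indicator 1 x)) =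
      volume.restrict (Ico a b) := by
  have h : (fun x => ENNReal.ofReal ((Ico a b).indicator 1 x)) =
      (Ico a b).indicator 1 := by
    funext x
    by_cases hx : x ∈ Ico a b <;> simp [hx]
  rw [h, withDensity_indicator_one measurableSet_Ico]

open Set in
/-- `W₂` is not invariant under mass addition: there are nonnegative
integrable `f, g` of equal mass and an `h̄` with `f + h̄ ≥ 0`, `g + h̄ ≥ 0`, such that
`W₂(f + h̄, g + h̄) ≠ W₂(f, g)`. -/
theorem W2_not_invariant_under_mass_addition :
    ∃ f g hbar : ℝ → ℝ,
      Integrable f ∧ Integrable g ∧ Integrable hbar ∧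
      (∀ x, 0 ≤ f x) ∧ (∀ x, 0 ≤ g x) ∧
      (∫ x, f x) = (∫ x, g x) ∧
      (∀ x, 0 ≤ f x + hbar x) ∧ (∀ x, 0 ≤ g x + hbar x) ∧
      W2sq (volume.withDensity fun x => ENNReal.ofReal (f x + hbar x))
          (volume.withDensity fun x => ENNReal.ofReal (g x + hbar x)) ≠
        W2sq (volume.withDensity fun x => ENNReal.ofReal (f x))
          (volume.withDensity fun x => ENNReal.ofReal (g x)) := by
  have hnn : ∀ (a b : ℝ) (x : ℝ), (0:ℝ) ≤ (Ico a b).indicator 1 x :=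
    fun a b x => indicator_nonneg (fun _ _ => zero_le_one) x
  have hint : ∀ a b : ℝ, Integrable ((Ico a b).indicator (1 : ℝ → ℝ)) := by
    intro a b
    refine (integrable_indicator_iff measurableSet_Ico).2
      (integrableOn_const ?_)
    rw [Real.volume_Ico]
    exact ENNReal.ofReal_ne_top
  refine ⟨(Ico (0:ℝ) 1).indicator 1, (Ico (4:ℝ) 5).indicator 1, (Ico (1:ℝ) 4).indicator 1,
    hint 0 1, hint 4 5, hint 1 4, hnn 0 1, hnn 4 5, ?_, ?_, ?_, ?_⟩
  · rw [integral_indicator_one measurableSet_Ico, integral_indicator_one measurableSet_Ico,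
      Real.volume_real_Ico, Real.volume_real_Ico]
    norm_num
  · intro x
    have h1 := hnn 0 1 x
    have h2 := hnn 1 4 x
    linarith
  · intro x
    have h1 := hnn 4 5 x
    have h2 := hnn 1 4 x
    linarith
  · have hsum1 : ∀ x : ℝ, (Ico (0:ℝ) 1).indicator 1 x + (Ico (1:ℝ) 4).indicator 1 x
        = (Ico (0:ℝ) 4).indicator (1 : ℝ → ℝ) x := by
      intro x
      rw [← Ico_union_Ico_eq_Ico (by norm_num : (0:ℝ) ≤ 1) (by norm_num : (1:ℝ) ≤ 4),
        indicator_union_of_disjoint (Ico_disjoint_Ico_same)]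
    have hsum2 : ∀ x : ℝ, (Ico (4:ℝ) 5).indicator 1 x + (Ico (1:ℝ) 4).indicator 1 x
        = (Ico (1:ℝ) 5).indicator (1 : ℝ → ℝ) x := by
      intro x
      rw [add_comm, ← Ico_union_Ico_eq_Ico (by norm_num : (1:ℝ) ≤ 4) (by norm_num : (4:ℝ) ≤ 5),
        indicator_union_of_disjoint (Ico_disjoint_Ico_same)]
    simp only [hsum1, hsum2, withDensity_ofReal_indicator_Ico]
    intro heq
    have h94 : (9 : ℝ≥0∞) ≤ 4 :=
      (W2sq_aux_lower.trans heq.ge).trans W2sq_aux_upper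
    norm_num at h94
end

section
/- If f, g are strictly positive C^{k,α} probability densities on a bounded interval and T is the optimal map between them (T = G^{-1}∘F), then the Fréchet derivative H of W₂²(·, g) at f, characterized by dH/dt = 2(t − T(t)), satisfies H ∈ C^{k+2,α}; in particular the adjoint source gains one degree of smoothness over the data. -/
open MeasureTheory intervalIntegral

/-- `f` is of class `C^{k,α}` on a set. -/
def CkHolderOn (k : ℕ) (α : NNReal) (f : ℝ → ℝ) (s : Set ℝ) : Prop :=
  ContDiffOn ℝ k f s ∧ ∃ C : NNReal, HolderOnWith C α (iteratedDerivWithin k f s) s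

/-- Real-constant Hölder condition on a set. -/
def HolR (α : ℝ) (u : ℝ → ℝ) (s : Set ℝ) : Prop :=
  ∃ C : ℝ, 0 ≤ C ∧ ∀ x ∈ s, ∀ y ∈ s, |u x - u y| ≤ C * |x - y| ^ α

/-- Recursive "C^m with α-Hölder top derivative" predicate. -/
def Good (α : ℝ) : ℕ → (ℝ → ℝ) → Set ℝ → Prop
  | 0, u, s => ContinuousOn u s ∧ HolR α u s
  | (m+1), u, s => DifferentiableOn ℝ u s ∧ Good α m (derivWithin u s) s

theorem holR_of_lip {α : ℝ} (hα : 0 < α) (hα1 : α ≤ 1) {u : ℝ → ℝ} {a b : ℝ}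
    {K : ℝ} (hK : 0 ≤ K)
    (h : ∀ x ∈ Set.Icc a b, ∀ y ∈ Set.Icc a b, |u x - u y| ≤ K * |x - y|) :
    HolR α u (Set.Icc a b) := by
  rcases le_or_gt b a with hba | hab
  · exact ⟨K, hK, fun x hx y hy => by
      have : x = y := le_antisymm (hx.2.trans (hba.trans hy.1)) (hy.2.trans (hba.trans hx.1))
      simp [this, Real.zero_rpow hα.ne', mul_nonneg hK le_rfl]⟩
  refine ⟨K * (b - a) ^ (1 - α), mul_nonneg hK (Real.rpow_nonneg (by linarith) _), ?_⟩
  intro x hx y hy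
  rcases eq_or_ne x y with rfl | hxy
  · simp [Real.zero_rpow hα.ne']
  have hd : 0 < |x - y| := abs_pos.2 (sub_ne_zero.2 hxy)
  have hdb : |x - y| ≤ b - a := by
    rw [abs_sub_le_iff]; constructor <;> linarith [hx.1, hx.2, hy.1, hy.2]
  calc |u x - u y| ≤ K * |x - y| := h x hx y hy
    _ = K * (|x - y| ^ (1 - α) * |x - y| ^ α) := by
        rw [← Real.rpow_add hd]; norm_num
    _ ≤ K * ((b - a) ^ (1 - α) * |x - y| ^ α) := by
        have h1 := Real.rpow_le_rpow (le_of_lt hd) hdb (by linarith : (0:ℝ) ≤ 1 - α)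
        have h2 : (0:ℝ) ≤ |x - y| ^ α := Real.rpow_nonneg (abs_nonneg _) _
        exact mul_le_mul_of_nonneg_left (mul_le_mul_of_nonneg_right h1 h2) hK
    _ = K * (b - a) ^ (1 - α) * |x - y| ^ α := by ring

theorem Good.continuousOn {α : ℝ} {m : ℕ} {u : ℝ → ℝ} {s : Set ℝ}
    (h : Good α m u s) : ContinuousOn u s := by
  cases m with
  | zero => exact h.1
  | succ m => exact h.1.continuousOn

theorem Good.lip {α : ℝ} {m : ℕ} {u : ℝ → ℝ} {a b : ℝ}
    (h : Good α (m+1) u (Set.Icc a b)) :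
    ∃ K : ℝ, 0 ≤ K ∧ ∀ x ∈ Set.Icc a b, ∀ y ∈ Set.Icc a b, |u x - u y| ≤ K * |x - y| := by
  have hc : ContinuousOn (derivWithin u (Set.Icc a b)) (Set.Icc a b) := h.2.continuousOn
  obtain ⟨C, hC⟩ := (isCompact_Icc).exists_bound_of_continuousOn hc
  refine ⟨max C 0, le_max_right _ _, fun x hx y hy => ?_⟩
  have := (convex_Icc a b).norm_image_sub_le_of_norm_derivWithin_le (f := u) (C := max C 0) h.1
    (fun z hz => (hC z hz).trans (le_max_left _ _)) hy hx
  simpa [Real.norm_eq_abs] using this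

theorem Good.downgrade {α : ℝ} (hα : 0 < α) (hα1 : α ≤ 1) {m : ℕ} {u : ℝ → ℝ} {a b : ℝ}
    (h : Good α (m+1) u (Set.Icc a b)) : Good α m u (Set.Icc a b) := by
  induction m generalizing u with
  | zero =>
    obtain ⟨K, hK0, hK⟩ := h.lip
    exact ⟨h.1.continuousOn, holR_of_lip hα hα1 hK0 hK⟩
  | succ m ih => exact ⟨h.1, ih h.2⟩

theorem Good.of_le {α : ℝ} (hα : 0 < α) (hα1 : α ≤ 1) {m m' : ℕ} (hm : m' ≤ m)
    {u : ℝ → ℝ} {a b : ℝ} (h : Good α m u (Set.Icc a b)) : Good α m' u (Set.Icc a b) := by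
  induction hm with
  | refl => exact h
  | @step n hn ih => exact ih (h.downgrade hα hα1)

theorem Good.congr {α : ℝ} {m : ℕ} {u v : ℝ → ℝ} {s : Set ℝ}
    (h : Good α m u s) (huv : Set.EqOn u v s) : Good α m v s := by
  cases m with
  | zero =>
    refine ⟨h.1.congr huv.symm, ?_⟩
    obtain ⟨C, hC0, hC⟩ := h.2
    exact ⟨C, hC0, fun x hx y hy => by rw [← huv hx, ← huv hy]; exact hC x hx y hy⟩
  | succ m =>
    refine ⟨fun x hx => (h.1 x hx).congr huv.symm (huv hx).symm, ?_⟩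
    exact h.2.congr fun x hx => derivWithin_congr huv (huv hx)

section Arith
variable {α : ℝ} (hα : 0 < α) (hα1 : α ≤ 1) {a b : ℝ} (hab : a < b)

theorem good_const {m : ℕ} (c : ℝ) (hab : a < b) :
    Good α m (fun _ => c) (Set.Icc a b) := by
  induction m generalizing c with
  | zero => exact ⟨continuousOn_const, ⟨0, le_rfl, fun x hx y hy => by
      simp [mul_nonneg le_rfl (Real.rpow_nonneg (abs_nonneg _) _)]⟩⟩
  | succ m ih =>
    refine ⟨differentiableOn_const c, (ih 0).congr fun x hx => ?_⟩
    exact (congrFun (derivWithin_const _ c) x).symm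

include hα hα1 hab in
theorem good_id {m : ℕ} : Good α m (fun x => x) (Set.Icc a b) := by
  cases m with
  | zero =>
    exact ⟨continuousOn_id, holR_of_lip hα hα1 zero_le_one (fun x _ y _ => le_of_eq (one_mul _).symm)⟩
  | succ m =>
    refine ⟨differentiableOn_id, (good_const 1 hab).congr fun x hx => ?_⟩
    exact (derivWithin_id x _ ((uniqueDiffOn_Icc hab) x hx)).symm

include hab in
theorem Good.add {m : ℕ} {u v : ℝ → ℝ} (hu : Good α m u (Set.Icc a b))
    (hv : Good α m v (Set.Icc a b)) : Good α m (fun x => u x + v x) (Set.Icc a b) := by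
  induction m generalizing u v with
  | zero =>
    refine ⟨hu.1.add hv.1, ?_⟩
    obtain ⟨C, hC0, hC⟩ := hu.2
    obtain ⟨D, hD0, hD⟩ := hv.2
    refine ⟨C + D, by linarith, fun x hx y hy => ?_⟩
    calc |u x + v x - (u y + v y)| ≤ |u x - u y| + |v x - v y| := by
          rw [show u x + v x - (u y + v y) = (u x - u y) + (v x - v y) by ring]
          exact abs_add_le _ _
      _ ≤ C * |x - y| ^ α + D * |x - y| ^ α := add_le_add (hC x hx y hy) (hD x hx y hy)
      _ = (C + D) * |x - y| ^ α := by ring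
  | succ m ih =>
    refine ⟨hu.1.add hv.1, (ih hu.2 hv.2).congr fun x hx => ?_⟩
    exact (derivWithin_add (hu.1 x hx) (hv.1 x hx)).symm

include hab in
theorem Good.const_mul {m : ℕ} {u : ℝ → ℝ} (c : ℝ) (hu : Good α m u (Set.Icc a b)) :
    Good α m (fun x => c * u x) (Set.Icc a b) := by
  induction m generalizing u with
  | zero =>
    refine ⟨hu.1.const_smul c, ?_⟩
    obtain ⟨C, hC0, hC⟩ := hu.2
    refine ⟨|c| * C, mul_nonneg (abs_nonneg _) hC0, fun x hx y hy => ?_⟩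
    calc |c * u x - c * u y| = |c| * |u x - u y| := by rw [← abs_mul]; ring_nf
      _ ≤ |c| * (C * |x - y| ^ α) := mul_le_mul_of_nonneg_left (hC x hx y hy) (abs_nonneg _)
      _ = |c| * C * |x - y| ^ α := by ring
  | succ m ih =>
    refine ⟨fun x hx => (hu.1 x hx).const_mul c, (ih hu.2).congr fun x hx => ?_⟩
    exact (derivWithin_const_mul c (hu.1 x hx)).symm

include hα hα1 hab in
theorem Good.mul {m : ℕ} {u v : ℝ → ℝ} (hu : Good α m u (Set.Icc a b))
    (hv : Good α m v (Set.Icc a b)) : Good α m (fun x => u x * v x) (Set.Icc a b) := by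
  induction m generalizing u v with
  | zero =>
    refine ⟨hu.1.mul hv.1, ?_⟩
    obtain ⟨C, hC0, hC⟩ := hu.2
    obtain ⟨D, hD0, hD⟩ := hv.2
    obtain ⟨Mu, hMu⟩ := isCompact_Icc.exists_bound_of_continuousOn hu.1
    obtain ⟨Mv, hMv⟩ := isCompact_Icc.exists_bound_of_continuousOn hv.1
    have hMu0 : 0 ≤ max Mu 0 := le_max_right _ _
    have hMv0 : 0 ≤ max Mv 0 := le_max_right _ _
    refine ⟨max Mu 0 * D + max Mv 0 * C,
      by positivity, fun x hx y hy => ?_⟩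
    have h1 : |u x| ≤ max Mu 0 := le_trans (le_of_eq (Real.norm_eq_abs _).symm)
      ((hMu x hx).trans (le_max_left _ _))
    have h2 : |v y| ≤ max Mv 0 := le_trans (le_of_eq (Real.norm_eq_abs _).symm)
      ((hMv y hy).trans (le_max_left _ _))
    have hr : (0:ℝ) ≤ |x - y| ^ α := Real.rpow_nonneg (abs_nonneg _) _
    calc |u x * v x - u y * v y| = |u x * (v x - v y) + v y * (u x - u y)| := by ring_nf
      _ ≤ |u x * (v x - v y)| + |v y * (u x - u y)| := abs_add_le _ _
      _ = |u x| * |v x - v y| + |v y| * |u x - u y| := by rw [abs_mul, abs_mul]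
      _ ≤ max Mu 0 * (D * |x - y| ^ α) + max Mv 0 * (C * |x - y| ^ α) := by
          refine add_le_add (mul_le_mul h1 (hD x hx y hy) (abs_nonneg _) hMu0)
            (mul_le_mul h2 (hC x hx y hy) (abs_nonneg _) hMv0)
      _ = (max Mu 0 * D + max Mv 0 * C) * |x - y| ^ α := by ring
  | succ m ih =>
    refine ⟨hu.1.mul hv.1, ?_⟩
    have h1 : Good α m (fun x => derivWithin u (Set.Icc a b) x * v x +
        u x * derivWithin v (Set.Icc a b) x) (Set.Icc a b) :=
      (ih hu.2 (hv.downgrade hα hα1)).add hab (ih (hu.downgrade hα hα1) hv.2)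
    refine h1.congr fun x hx => ?_
    exact (derivWithin_mul (hu.1 x hx) (hv.1 x hx)).symm

include hα hα1 hab in
theorem Good.inv {m : ℕ} {u : ℝ → ℝ} {c : ℝ} (hc : 0 < c)
    (hu : Good α m u (Set.Icc a b)) (hlb : ∀ x ∈ Set.Icc a b, c ≤ |u x|) :
    Good α m (fun x => (u x)⁻¹) (Set.Icc a b) := by
  have hne : ∀ x ∈ Set.Icc a b, u x ≠ 0 := fun x hx h0 => by
    have := hlb x hx; rw [h0] at this; simp at this; linarith
  induction m generalizing u with
  | zero =>
    refine ⟨hu.1.inv₀ hne, ?_⟩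
    obtain ⟨C, hC0, hC⟩ := hu.2
    refine ⟨C / (c * c), by positivity, fun x hx y hy => ?_⟩
    have hx0 := hne x hx
    have hy0 := hne y hy
    have key : (u x)⁻¹ - (u y)⁻¹ = (u y - u x) / (u x * u y) := by
      field_simp
    rw [key, abs_div, abs_mul]
    have h1 : |u y - u x| ≤ C * |x - y| ^ α := by
      have := hC y hy x hx
      rwa [abs_sub_comm y x] at this
    have h2 : c * c ≤ |u x| * |u y| :=
      mul_le_mul (hlb x hx) (hlb y hy) (le_of_lt hc) (abs_nonneg _)
    have hcc : (0:ℝ) < c * c := by positivity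
    calc |u y - u x| / (|u x| * |u y|) ≤ (C * |x - y| ^ α) / (c * c) := by
          apply div_le_div₀ (by positivity) h1 hcc h2
      _ = C / (c * c) * |x - y| ^ α := by ring
  | succ m ih =>
    have hdiff : DifferentiableOn ℝ (fun x => (u x)⁻¹) (Set.Icc a b) :=
      fun x hx => ((hu.1 x hx).inv (hne x hx))
    refine ⟨hdiff, ?_⟩
    have h1 : Good α m (fun x => (-1 * derivWithin u (Set.Icc a b) x) *
        ((u x)⁻¹ * (u x)⁻¹)) (Set.Icc a b) := by
      refine Good.mul hα hα1 hab ((hu.2).const_mul hab (-1)) ?_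
      have hinv : Good α m (fun x => (u x)⁻¹) (Set.Icc a b) :=
        ih (hu.downgrade hα hα1) hlb hne
      exact hinv.mul hα hα1 hab hinv
    refine h1.congr fun x hx => ?_
    have := ((hu.1 x hx).hasDerivWithinAt).inv (hne x hx)
    rw [show (fun x => (u x)⁻¹) = u⁻¹ from rfl, this.derivWithin ((uniqueDiffOn_Icc hab) x hx)]
    field_simp
end Arith

/-- Composition: `u ∘ v` is Good when `u, v` are Good and `v` is Lipschitz. -/
theorem Good.comp {α : ℝ} (hα : 0 < α) (hα1 : α ≤ 1) {a b a' b' : ℝ}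
    (hab : a < b) (hab' : a' < b') {m : ℕ} {u v : ℝ → ℝ} {K : ℝ} (hK : 0 ≤ K)
    (hu : Good α m u (Set.Icc a b)) (hv : Good α m v (Set.Icc a' b'))
    (hmaps : Set.MapsTo v (Set.Icc a' b') (Set.Icc a b))
    (hlip : ∀ x ∈ Set.Icc a' b', ∀ y ∈ Set.Icc a' b', |v x - v y| ≤ K * |x - y|) :
    Good α m (fun x => u (v x)) (Set.Icc a' b') := by
  induction m generalizing u v K with
  | zero =>
    refine ⟨hu.1.comp hv.1 hmaps, ?_⟩
    obtain ⟨C, hC0, hC⟩ := hu.2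
    refine ⟨C * K ^ α, mul_nonneg hC0 (Real.rpow_nonneg hK _), fun x hx y hy => ?_⟩
    calc |u (v x) - u (v y)| ≤ C * |v x - v y| ^ α := hC _ (hmaps hx) _ (hmaps hy)
      _ ≤ C * (K * |x - y|) ^ α := by
          apply mul_le_mul_of_nonneg_left _ hC0
          exact Real.rpow_le_rpow (abs_nonneg _) (hlip x hx y hy) (le_of_lt hα)
      _ = C * K ^ α * |x - y| ^ α := by
          rw [Real.mul_rpow hK (abs_nonneg _)]; ring
  | succ m ih =>
    have hdiff : DifferentiableOn ℝ (fun x => u (v x)) (Set.Icc a' b') := fun x hx =>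
      ((hu.1 _ (hmaps hx)).comp x (hv.1 x hx) hmaps)
    refine ⟨hdiff, ?_⟩
    have h1 : Good α m (fun x => derivWithin u (Set.Icc a b) (v x) *
        derivWithin v (Set.Icc a' b') x) (Set.Icc a' b') := by
      refine Good.mul hα hα1 hab' ?_ hv.2
      exact ih hK hu.2 (hv.downgrade hα hα1) hmaps hlip
    refine h1.congr fun x hx => ?_
    exact (derivWithin_comp x (hu.1 _ (hmaps hx)) (hv.1 x hx) hmaps).symm

/-- Integration: a differentiable function whose `derivWithin` is Good m is Good (m+1). -/
theorem Good.of_deriv {α : ℝ} {a b : ℝ} {m : ℕ} {U u : ℝ → ℝ}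
    (hU : DifferentiableOn ℝ U (Set.Icc a b))
    (hderiv : ∀ x ∈ Set.Icc a b, derivWithin U (Set.Icc a b) x = u x)
    (hu : Good α m u (Set.Icc a b)) : Good α (m+1) U (Set.Icc a b) :=
  ⟨hU, hu.congr fun x hx => (hderiv x hx).symm⟩

/-- Conversion from `HolderOnWith` to `HolR`. -/
theorem holR_of_holderOnWith {C : NNReal} {α : NNReal} {u : ℝ → ℝ} {s : Set ℝ}
    (h : HolderOnWith C α u s) : HolR (α : ℝ) u s := by
  refine ⟨C, C.coe_nonneg, fun x hx y hy => ?_⟩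
  have h2 := h.edist_le hx hy
  rw [edist_dist, edist_dist,
    ENNReal.ofReal_rpow_of_nonneg dist_nonneg α.coe_nonneg,
    ← ENNReal.ofReal_coe_nnreal,
    ← ENNReal.ofReal_mul C.coe_nonneg] at h2
  have h3 := (ENNReal.ofReal_le_ofReal_iff (by positivity)).1 h2
  simpa [Real.dist_eq] using h3

/-- Conversion from `HolR` to `HolderOnWith`. -/
theorem holderOnWith_of_holR {α : NNReal} {u : ℝ → ℝ} {s : Set ℝ}
    (h : HolR (α : ℝ) u s) : ∃ C : NNReal, HolderOnWith C α u s := by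
  obtain ⟨C, hC0, hC⟩ := h
  refine ⟨C.toNNReal, fun x hx y hy => ?_⟩
  have hcoe : ((C.toNNReal : NNReal) : ENNReal) = ENNReal.ofReal C := rfl
  rw [edist_dist, edist_dist,
    ENNReal.ofReal_rpow_of_nonneg dist_nonneg α.coe_nonneg,
    hcoe, ← ENNReal.ofReal_mul hC0]
  exact ENNReal.ofReal_le_ofReal (by simpa [Real.dist_eq] using hC x hx y hy)

/-- `Good` implies `CkHolderOn`-style data. -/
theorem Good.contDiffOn_and_hol {α : ℝ} {a b : ℝ} (hab : a < b) {m : ℕ} {u : ℝ → ℝ}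
    (h : Good α m u (Set.Icc a b)) :
    ContDiffOn ℝ m u (Set.Icc a b) ∧ HolR α (iteratedDerivWithin m u (Set.Icc a b)) (Set.Icc a b) := by
  induction m generalizing u with
  | zero =>
    refine ⟨by simpa using h.1, ?_⟩
    obtain ⟨C, hC0, hC⟩ := h.2
    exact ⟨C, hC0, fun x hx y hy => by simpa [iteratedDerivWithin_zero] using hC x hx y hy⟩
  | succ m ih =>
    obtain ⟨hcd, hhol⟩ := ih h.2
    constructor
    · rw [show ((m + 1 : ℕ) : WithTop ℕ∞) = (m : WithTop ℕ∞) + 1 by push_cast; ring,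
        contDiffOn_succ_iff_derivWithin (uniqueDiffOn_Icc hab)]
      exact ⟨h.1, by simp, hcd⟩
    · obtain ⟨C, hC0, hC⟩ := hhol
      refine ⟨C, hC0, fun x hx y hy => ?_⟩
      rw [iteratedDerivWithin_succ']
      exact hC x hx y hy

/-- `CkHolderOn`-style data implies `Good`. -/
theorem good_of_contDiffOn_and_hol {α : ℝ} {a b : ℝ} (hab : a < b) {m : ℕ} {u : ℝ → ℝ}
    (hcd : ContDiffOn ℝ m u (Set.Icc a b))
    (hhol : HolR α (iteratedDerivWithin m u (Set.Icc a b)) (Set.Icc a b)) :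
    Good α m u (Set.Icc a b) := by
  induction m generalizing u with
  | zero =>
    refine ⟨by simpa using hcd, ?_⟩
    obtain ⟨C, hC0, hC⟩ := hhol
    exact ⟨C, hC0, fun x hx y hy => by simpa [iteratedDerivWithin_zero] using hC x hx y hy⟩
  | succ m ih =>
    rw [show ((m + 1 : ℕ) : WithTop ℕ∞) = (m : WithTop ℕ∞) + 1 by push_cast; ring,
        contDiffOn_succ_iff_derivWithin (uniqueDiffOn_Icc hab)] at hcd
    refine ⟨hcd.1, ih hcd.2.2 ?_⟩
    obtain ⟨C, hC0, hC⟩ := hhol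
    refine ⟨C, hC0, fun x hx y hy => ?_⟩
    have hx' := hC x hx y hy
    rwa [iteratedDerivWithin_succ'] at hx'

section Analytic

/-- Lower bound on increments of a primitive. -/
theorem primitive_incr_ge {h : ℝ → ℝ} (hh : Continuous h) {c : ℝ}
    (hlb : ∀ t, c ≤ h t) {p x y : ℝ} (hxy : x ≤ y) :
    c * (y - x) ≤ (∫ t in p..y, h t) - ∫ t in p..x, h t := by
  have hadd : (∫ t in p..x, h t) + (∫ t in x..y, h t) = ∫ t in p..y, h t :=
    intervalIntegral.integral_add_adjacent_intervals
      (hh.intervalIntegrable _ _) (hh.intervalIntegrable _ _)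
  have hmono : (∫ t in x..y, (c : ℝ)) ≤ ∫ t in x..y, h t :=
    intervalIntegral.integral_mono_on hxy (intervalIntegrable_const)
      (hh.intervalIntegrable _ _) (fun t _ => hlb t)
  rw [intervalIntegral.integral_const, smul_eq_mul] at hmono
  linarith [hmono, hadd]

end Analytic

/-- for strictly positive `C^{k,α}` probability densities `f, g` on a
bounded interval with optimal map `T = G⁻¹ ∘ F`, the Fréchet derivative `H` of
`W₂²(·,g)` at `f`, characterized by `H' = 2(t − T(t))`, belongs to `C^{k+2,α}`. -/
theorem adjoint_source_smoothing_1D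
    (p q : ℝ) (hpq : p < q) (k : ℕ) (α : NNReal) (hα : 0 < (α : ℝ)) (hα1 : (α : ℝ) < 1)
    (f g : ℝ → ℝ) (hf_meas : Measurable f) (hg_meas : Measurable g)
    (hf_pos : ∀ x ∈ Set.Icc p q, 0 < f x) (hg_pos : ∀ x ∈ Set.Icc p q, 0 < g x)
    (hf_prob : ∫ x in Set.Icc p q, f x = 1) (hg_prob : ∫ x in Set.Icc p q, g x = 1)
    (hf_reg : CkHolderOn k α f (Set.Icc p q)) (hg_reg : CkHolderOn k α g (Set.Icc p q))
    (F G : ℝ → ℝ)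
    (hF : ∀ x, F x = ∫ t in p..x, f t) (hG : ∀ x, G x = ∫ t in p..x, g t)
    (T : ℝ → ℝ) (hT : ∀ x, T x = Function.invFunOn G (Set.Icc p q) (F x))
    (H : ℝ → ℝ)
    (hH_diff : ∀ t ∈ Set.Icc p q, DifferentiableWithinAt ℝ H (Set.Icc p q) t)
    (hH : ∀ t ∈ Set.Icc p q, derivWithin H (Set.Icc p q) t = 2 * (t - T t)) :
    CkHolderOn (k + 2) α H (Set.Icc p q) := by
  have hα1' : (α : ℝ) ≤ 1 := le_of_lt hα1
  have hf_cont : ContinuousOn f (Set.Icc p q) := hf_reg.1.continuousOn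
  have hg_cont : ContinuousOn g (Set.Icc p q) := hg_reg.1.continuousOn
  -- Good versions of the regularity hypotheses
  obtain ⟨Cf, hCf⟩ := hf_reg.2
  obtain ⟨Cg, hCg⟩ := hg_reg.2
  have hf_good : Good (α : ℝ) k f (Set.Icc p q) :=
    good_of_contDiffOn_and_hol hpq hf_reg.1 (holR_of_holderOnWith hCf)
  have hg_good : Good (α : ℝ) k g (Set.Icc p q) :=
    good_of_contDiffOn_and_hol hpq hg_reg.1 (holR_of_holderOnWith hCg)
  -- clamp function
  set cl : ℝ → ℝ := fun x => min q (max p x) with hcl_def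
  have hcl_cont : Continuous cl := continuous_const.min (continuous_const.max continuous_id)
  have hcl_mem : ∀ x, cl x ∈ Set.Icc p q := fun x =>
    ⟨le_min (le_of_lt hpq) (le_max_left _ _), min_le_left _ _⟩
  have hcl_id : ∀ x ∈ Set.Icc p q, cl x = x := fun x hx => by
    simp only [hcl_def]
    rw [max_eq_right hx.1, min_eq_right hx.2]
  -- extensions
  set fe : ℝ → ℝ := fun x => f (cl x) with hfe_def
  set ge : ℝ → ℝ := fun x => g (cl x) with hge_def
  have hfe_cont : Continuous fe := hf_cont.comp_continuous hcl_cont hcl_mem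
  have hge_cont : Continuous ge := hg_cont.comp_continuous hcl_cont hcl_mem
  have hfe_eq : ∀ x ∈ Set.Icc p q, fe x = f x := fun x hx => by
    show f (cl x) = f x
    rw [hcl_id x hx]
  have hge_eq : ∀ x ∈ Set.Icc p q, ge x = g x := fun x hx => by
    show g (cl x) = g x
    rw [hcl_id x hx]
  have hfe_nonneg : ∀ t, 0 ≤ fe t := fun t => le_of_lt (hf_pos _ (hcl_mem t))
  -- positive lower bound for g
  obtain ⟨z, hz, hzmin⟩ := isCompact_Icc.exists_isMinOn (Set.nonempty_Icc.2 (le_of_lt hpq)) hg_cont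
  set cg : ℝ := g z with hcg_def
  have hcg : 0 < cg := hg_pos z hz
  have hge_lb : ∀ t, cg ≤ ge t := fun t => hzmin (hcl_mem t)
  -- primitives
  set Fe : ℝ → ℝ := fun x => ∫ t in p..x, fe t with hFe_def
  set Ge : ℝ → ℝ := fun x => ∫ t in p..x, ge t with hGe_def
  have hFe' : ∀ x, HasDerivAt Fe (fe x) x := fun x =>
    (hfe_cont.integral_hasStrictDerivAt p x).hasDerivAt
  have hGe' : ∀ x, HasDerivAt Ge (ge x) x := fun x =>
    (hge_cont.integral_hasStrictDerivAt p x).hasDerivAt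
  -- F = Fe, G = Ge on Icc p q
  have hFFe : ∀ x ∈ Set.Icc p q, F x = Fe x := by
    intro x hx
    rw [hF x, hFe_def]
    refine intervalIntegral.integral_congr fun t ht => ?_
    rw [Set.uIcc_of_le hx.1] at ht
    exact (hfe_eq t ⟨ht.1, le_trans ht.2 hx.2⟩).symm
  have hGGe : ∀ x ∈ Set.Icc p q, G x = Ge x := by
    intro x hx
    rw [hG x, hGe_def]
    refine intervalIntegral.integral_congr fun t ht => ?_
    rw [Set.uIcc_of_le hx.1] at ht
    exact (hge_eq t ⟨ht.1, le_trans ht.2 hx.2⟩).symm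
  -- values at endpoints
  have hFep : Fe p = 0 := intervalIntegral.integral_same
  have hGep : Ge p = 0 := intervalIntegral.integral_same
  have hFeq : Fe q = 1 := by
    show (∫ t in p..q, fe t) = 1
    have h1 : (∫ t in p..q, fe t) = ∫ t in p..q, f t :=
      intervalIntegral.integral_congr fun t ht => by
        rw [Set.uIcc_of_le (le_of_lt hpq)] at ht; exact hfe_eq t ht
    rw [h1, intervalIntegral.integral_of_le (le_of_lt hpq),
      ← MeasureTheory.integral_Icc_eq_integral_Ioc]
    exact hf_prob
  have hGeq : Ge q = 1 := by
    show (∫ t in p..q, ge t) = 1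
    have h1 : (∫ t in p..q, ge t) = ∫ t in p..q, g t :=
      intervalIntegral.integral_congr fun t ht => by
        rw [Set.uIcc_of_le (le_of_lt hpq)] at ht; exact hge_eq t ht
    rw [h1, intervalIntegral.integral_of_le (le_of_lt hpq),
      ← MeasureTheory.integral_Icc_eq_integral_Ioc]
    exact hg_prob
  -- strict monotonicity and surjectivity of Ge
  have hGe_incr : ∀ x y : ℝ, x ≤ y → cg * (y - x) ≤ Ge y - Ge x := fun x y hxy =>
    primitive_incr_ge hge_cont hge_lb hxy
  have hGe_mono : StrictMono Ge := fun x y hxy => by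
    have := hGe_incr x y (le_of_lt hxy); nlinarith
  have hGe_diffF : Differentiable ℝ Ge := fun x => (hGe' x).differentiableAt
  have hGe_contF : Continuous Ge := hGe_diffF.continuous
  have hGe_surj : Function.Surjective Ge := by
    intro y
    set R : ℝ := (|y| + 1) / cg with hR_def
    have hR : 0 < R := by positivity
    have hcgR : cg * R = |y| + 1 := by
      rw [hR_def]; field_simp
    have h1 : Ge (p + R) ≥ |y| + 1 := by
      have := hGe_incr p (p + R) (by linarith)
      rw [hGep] at this
      have h2 : cg * (p + R - p) = |y| + 1 := by rw [show p + R - p = R by ring]; exact hcgR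
      linarith
    have h2 : Ge (p - R) ≤ -(|y| + 1) := by
      have := hGe_incr (p - R) p (by linarith)
      rw [hGep] at this
      have h3 : cg * (p - (p - R)) = |y| + 1 := by rw [show p - (p - R) = R by ring]; exact hcgR
      linarith
    have hy : y ∈ Set.Icc (Ge (p - R)) (Ge (p + R)) :=
      ⟨by linarith [neg_abs_le y], by linarith [le_abs_self y]⟩
    obtain ⟨x, _, hx⟩ := intermediate_value_Icc (by linarith : p - R ≤ p + R)
      hGe_contF.continuousOn hy
    exact ⟨x, hx⟩
  -- the inverse
  set E : ℝ ≃o ℝ := StrictMono.orderIsoOfSurjective Ge hGe_mono hGe_surj with hE_def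
  set Geinv : ℝ → ℝ := fun y => E.symm y with hGeinv_def
  have hE_coe : ∀ x, E x = Ge x := fun x => by
    rw [hE_def]; rfl
  have hGeinv_right : ∀ y, Ge (Geinv y) = y := fun y => by
    rw [hGeinv_def, ← hE_coe]; exact E.apply_symm_apply y
  have hGeinv_left : ∀ x, Geinv (Ge x) = x := fun x => by
    rw [hGeinv_def, ← hE_coe]; exact E.symm_apply_apply x
  have hGeinv_cont : Continuous Geinv := E.symm.continuous
  have hGeinv' : ∀ y, HasDerivAt Geinv (ge (Geinv y))⁻¹ y := fun y =>
    HasDerivAt.of_local_left_inverse hGeinv_cont.continuousAt (hGe' (Geinv y))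
      (ne_of_gt (lt_of_lt_of_le hcg (hge_lb _)))
      (Filter.Eventually.of_forall hGeinv_right)
  have hGeinv_mono : Monotone Geinv := fun x y hxy => E.symm.monotone hxy
  have hGeinv0 : Geinv 0 = p := by rw [← hGep]; exact hGeinv_left p
  have hGeinv1 : Geinv 1 = q := by rw [← hGeq]; exact hGeinv_left q
  have hGeinv_maps : Set.MapsTo Geinv (Set.Icc (0:ℝ) 1) (Set.Icc p q) := fun y hy =>
    ⟨hGeinv0 ▸ hGeinv_mono hy.1, hGeinv1 ▸ hGeinv_mono hy.2⟩
  -- Geinv is Lipschitz with constant cg⁻¹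
  have hGeinv_lip : ∀ x y : ℝ, |Geinv x - Geinv y| ≤ cg⁻¹ * |x - y| := by
    have key : ∀ x y : ℝ, y ≤ x → Geinv x - Geinv y ≤ cg⁻¹ * (x - y) := by
      intro x y hxy
      have hm : Geinv y ≤ Geinv x := hGeinv_mono hxy
      have := hGe_incr (Geinv y) (Geinv x) hm
      rw [hGeinv_right, hGeinv_right] at this
      rw [inv_mul_eq_div, le_div_iff₀ hcg]
      nlinarith
    intro x y
    rcases le_total y x with h | h
    · rw [abs_of_nonneg (by linarith [hGeinv_mono h] : (0:ℝ) ≤ Geinv x - Geinv y),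
        abs_of_nonneg (by linarith : (0:ℝ) ≤ x - y)]
      exact key x y h
    · rw [abs_of_nonpos (by linarith [hGeinv_mono h] : Geinv x - Geinv y ≤ 0),
        abs_of_nonpos (by linarith : x - y ≤ 0)]
      have := key y x h
      linarith
  have hcginv : (0:ℝ) ≤ cg⁻¹ := le_of_lt (by positivity)
  -- Good regularity of Geinv on [0,1]
  have hGeinv_good : ∀ m, m ≤ k + 1 → Good (α : ℝ) m Geinv (Set.Icc (0:ℝ) 1) := by
    intro m
    induction m with
    | zero =>
      intro _
      exact ⟨hGeinv_cont.continuousOn, holR_of_lip hα hα1' hcginv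
        (fun x _ y _ => hGeinv_lip x y)⟩
    | succ m ih =>
      intro hm
      have hm' : m ≤ k := Nat.lt_succ_iff.mp hm
      refine ⟨fun y hy => (hGeinv' y).differentiableAt.differentiableWithinAt, ?_⟩
      have hcomp : Good (α : ℝ) m (fun y => g (Geinv y)) (Set.Icc (0:ℝ) 1) :=
        Good.comp hα hα1' hpq zero_lt_one hcginv
          (hg_good.of_le hα hα1' hm') (ih (le_trans (Nat.le_succ m) hm))
          hGeinv_maps (fun x _ y _ => hGeinv_lip x y)
      have hinv : Good (α : ℝ) m (fun y => (g (Geinv y))⁻¹) (Set.Icc (0:ℝ) 1) := by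
        refine hcomp.inv hα hα1' zero_lt_one hcg ?_
        intro y hy
        rw [abs_of_pos (hg_pos _ (hGeinv_maps hy))]
        exact hzmin (hGeinv_maps hy)
      refine hinv.congr fun y hy => ?_
      have hd : derivWithin Geinv (Set.Icc (0:ℝ) 1) y = (ge (Geinv y))⁻¹ :=
        ((hGeinv' y).hasDerivWithinAt).derivWithin ((uniqueDiffOn_Icc zero_lt_one) y hy)
      rw [hd, hge_eq _ (hGeinv_maps hy)]
  -- regularity of F
  have hF_diff : DifferentiableOn ℝ F (Set.Icc p q) := by
    intro x hx
    exact (((hFe' x).hasDerivWithinAt).congr (fun y hy => hFFe y hy) (hFFe x hx)).differentiableWithinAt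
  have hF_deriv : ∀ x ∈ Set.Icc p q, derivWithin F (Set.Icc p q) x = f x := by
    intro x hx
    have h1 : HasDerivWithinAt F (fe x) (Set.Icc p q) x :=
      ((hFe' x).hasDerivWithinAt).congr (fun y hy => hFFe y hy) (hFFe x hx)
    rw [h1.derivWithin ((uniqueDiffOn_Icc hpq) x hx)]
    exact hfe_eq x hx
  have hF_good : Good (α : ℝ) (k+1) F (Set.Icc p q) :=
    Good.of_deriv hF_diff hF_deriv hf_good
  -- F maps into [0,1]
  have hFe_incr : ∀ x y : ℝ, x ≤ y → (0:ℝ) ≤ Fe y - Fe x := fun x y hxy => by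
    have := primitive_incr_ge hfe_cont hfe_nonneg (c := 0) (p := p) hxy
    simpa using this
  have hF_maps : Set.MapsTo F (Set.Icc p q) (Set.Icc (0:ℝ) 1) := by
    intro x hx
    rw [hFFe x hx]
    constructor
    · have := hFe_incr p x hx.1; rw [hFep] at this; linarith
    · have := hFe_incr x q hx.2; rw [hFeq] at this; linarith
  -- F is Lipschitz
  obtain ⟨Mf, hMf⟩ := isCompact_Icc.exists_bound_of_continuousOn hf_cont
  have hF_lip : ∀ x ∈ Set.Icc p q, ∀ y ∈ Set.Icc p q, |F x - F y| ≤ max Mf 0 * |x - y| := by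
    intro x hx y hy
    have := (convex_Icc p q).norm_image_sub_le_of_norm_derivWithin_le (f := F)
      (C := max Mf 0) hF_diff
      (fun z hz => by rw [hF_deriv z hz]; exact (hMf z hz).trans (le_max_left _ _)) hy hx
    simpa [Real.norm_eq_abs] using this
  -- T = Geinv ∘ F on Icc p q
  have hG_mono : StrictMonoOn G (Set.Icc p q) := fun a ha b hb hab => by
    rw [hGGe a ha, hGGe b hb]; exact hGe_mono hab
  have hT_eq : ∀ x ∈ Set.Icc p q, T x = Geinv (F x) := by
    intro x hx
    have hy : F x ∈ Set.Icc (0:ℝ) 1 := hF_maps hx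
    have hmem : Geinv (F x) ∈ Set.Icc p q := hGeinv_maps hy
    have hGG : G (Geinv (F x)) = F x := by rw [hGGe _ hmem]; exact hGeinv_right _
    have hex : ∃ a ∈ Set.Icc p q, G a = F x := ⟨_, hmem, hGG⟩
    rw [hT x]
    exact hG_mono.injOn (Function.invFunOn_mem hex) hmem
      (by rw [Function.invFunOn_eq hex, hGG])
  have hT_good : Good (α : ℝ) (k+1) T (Set.Icc p q) := by
    have := Good.comp hα hα1' zero_lt_one hpq (le_max_right Mf 0)
      (hGeinv_good (k+1) le_rfl) hF_good hF_maps hF_lip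
    exact this.congr fun x hx => (hT_eq x hx).symm
  -- right-hand side of the ODE for H
  have hrhs : Good (α : ℝ) (k+1) (fun t => 2 * (t - T t)) (Set.Icc p q) := by
    have h1 : Good (α : ℝ) (k+1) (fun t => 2 * (t + (-1) * T t)) (Set.Icc p q) :=
      ((good_id hα hα1' hpq).add hpq (hT_good.const_mul hpq (-1))).const_mul hpq 2
    exact h1.congr fun x hx => by ring
  -- conclude
  have hH_good : Good (α : ℝ) (k+2) H (Set.Icc p q) :=
    ⟨fun x hx => hH_diff x hx, hrhs.congr fun x hx => (hH x hx).symm⟩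
  obtain ⟨hcd, hhol⟩ := hH_good.contDiffOn_and_hol hpq
  exact ⟨hcd, holderOnWith_of_holR hhol⟩
end
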